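/- Fix a prime p, natural numbers m and N with N ≥ 1, and for j ∈ ℕ write q_j := ⌊j / p^m⌋. Let D^(m) be the ℤ_p-submodule of ℚ_p[X_1,…,X_N] spanned by the elements ξ^⟨k⟩ := (∏_{i=1}^N q_{k_i}!/k_i!) · X_1^{k_1}⋯X_N^{k_N} for k ∈ ℕ^N. Then D^(m) equals the ℤ_p-subalgebra of ℚ_p[X_1,…,X_N] generated by the finite set { X_j^{p^i}/(p^i)! : 1 ≤ j ≤ N, 0 ≤ i ≤ m }; in particular D^(m) is a Noetherian ring. -/

import Mathlib

open scoped BigOperators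

/-- The element `ξ^⟨k⟩ = (∏ q_{k_i}!/k_i!) · X^k` of `ℚ_p[X_1,…,X_N]`,
realizing the basis of the level-`m` distribution algebra `D^(m)(𝔾_a^N)`. -/
noncomputable def xiGa (p : ℕ) [Fact p.Prime] (m N : ℕ) (k : Fin N →₀ ℕ) :
    MvPolynomial (Fin N) ℚ_[p] :=
  (∏ i : Fin N,
      ((Nat.factorial (k i / p ^ m) : ℚ_[p]) / (Nat.factorial (k i) : ℚ_[p]))) •
    MvPolynomial.monomial k (1 : ℚ_[p])

open Finset Nat

variable {p : ℕ} [hp : Fact p.Prime]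

-- shift lemma
lemma aux_shift (g : ℕ → ℕ) (B m : ℕ) (hg : ∀ j, B ≤ j → g j = 0) :
    ∑ i ∈ Finset.Ico 1 B, g (m + i) ≤ ∑ i ∈ Finset.Ico 1 B, g i := by
  rcases Nat.eq_zero_or_pos B with hB | hB
  · simp [hB]
  have h1 : ∑ i ∈ Finset.Ico 1 B, g (m + i) = ∑ j ∈ Finset.Ico (1 + m) (B + m), g j := by
    rw [Finset.sum_Ico_eq_sum_range, Finset.sum_Ico_eq_sum_range]
    apply Finset.sum_congr (by congr 1; omega)
    intro x _; ring_nf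
  rw [h1]
  calc ∑ j ∈ Finset.Ico (1 + m) (B + m), g j
      ≤ ∑ j ∈ Finset.Ico 1 (B + m), g j :=
        Finset.sum_le_sum_of_subset (Finset.Ico_subset_Ico (by omega) le_rfl)
    _ = ∑ j ∈ Finset.Ico 1 B, g j + ∑ j ∈ Finset.Ico B (B + m), g j :=
        (Finset.sum_Ico_consecutive _ hB (by omega)).symm
    _ = ∑ j ∈ Finset.Ico 1 B, g j := by
        rw [Finset.sum_eq_zero (fun j hj => hg j (Finset.mem_Ico.mp hj).1), add_zero]

lemma valA (m a b : ℕ) :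
    padicValNat p (a ! * b ! * ((a + b) / p ^ m)!) ≤
    padicValNat p ((a + b)! * ((a / p ^ m)! * (b / p ^ m)!)) := by
  have hp1 : 1 < p := hp.out.one_lt
  set B := Nat.log p (a + b) + 1 with hB
  have hval : ∀ n, n ≤ a + b → padicValNat p (n !) = ∑ i ∈ Finset.Ico 1 B, n / p ^ i :=
    fun n hn => padicValNat_factorial
      (lt_of_le_of_lt (Nat.log_mono_right hn) (Nat.lt_succ_self _))
  rw [padicValNat.mul (by positivity) (by positivity),
      padicValNat.mul (Nat.factorial_ne_zero _) (Nat.factorial_ne_zero _),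
      padicValNat.mul (Nat.factorial_ne_zero _) (by positivity),
      padicValNat.mul (Nat.factorial_ne_zero _) (Nat.factorial_ne_zero _),
      hval a (Nat.le_add_right _ _), hval b (Nat.le_add_left _ _),
      hval ((a + b) / p ^ m) (Nat.div_le_self _ _),
      hval (a + b) le_rfl,
      hval (a / p ^ m) (le_trans (Nat.div_le_self _ _) (Nat.le_add_right _ _)),
      hval (b / p ^ m) (le_trans (Nat.div_le_self _ _) (Nat.le_add_left _ _))]
  have hdd : ∀ n, ∑ i ∈ Finset.Ico 1 B, n / p ^ m / p ^ i
      = ∑ i ∈ Finset.Ico 1 B, n / p ^ (m + i) :=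
    fun n => Finset.sum_congr rfl fun i _ => by rw [Nat.div_div_eq_div_mul, pow_add]
  rw [hdd a, hdd b, hdd (a + b)]
  set e : ℕ → ℕ := fun j => (a + b) / p ^ j - (a / p ^ j + b / p ^ j) with he'
  have he : ∀ j, (a + b) / p ^ j = a / p ^ j + b / p ^ j + e j := fun j =>
    (Nat.add_sub_cancel' (Nat.add_div_le_add_div a b (p ^ j))).symm
  have hg : ∀ j, B ≤ j → e j = 0 := by
    intro j hj
    have : a + b < p ^ j := lt_of_lt_of_le (Nat.lt_pow_succ_log_self hp1 (a + b))
      (Nat.pow_le_pow_right (le_of_lt hp1) hj)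
    simp [he', Nat.div_eq_of_lt this]
  have key := aux_shift e B m hg
  have h1 : ∑ i ∈ Finset.Ico 1 B, (a + b) / p ^ i
      = ∑ i ∈ Finset.Ico 1 B, a / p ^ i + ∑ i ∈ Finset.Ico 1 B, b / p ^ i
        + ∑ i ∈ Finset.Ico 1 B, e i := by
    rw [← Finset.sum_add_distrib, ← Finset.sum_add_distrib]
    exact Finset.sum_congr rfl fun j _ => he j
  have h2 : ∑ i ∈ Finset.Ico 1 B, (a + b) / p ^ (m + i)
      = ∑ i ∈ Finset.Ico 1 B, a / p ^ (m + i) + ∑ i ∈ Finset.Ico 1 B, b / p ^ (m + i)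
        + ∑ i ∈ Finset.Ico 1 B, e (m + i) := by
    rw [← Finset.sum_add_distrib, ← Finset.sum_add_distrib]
    exact Finset.sum_congr rfl fun j _ => he (m + j)
  omega

lemma sum_shift (g : ℕ → ℕ) (B m : ℕ) :
    ∑ i ∈ Finset.Ico 1 B, g (m + i) = ∑ j ∈ Finset.Ico (1 + m) (B + m), g j := by
  rw [Finset.sum_Ico_eq_sum_range, Finset.sum_Ico_eq_sum_range]
  apply Finset.sum_congr (by congr 1; omega)
  intro x _; ring_nf

lemma exact_div_add (b j i : ℕ) (hji : j ≤ i) :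
    (b + p ^ i) / p ^ j = b / p ^ j + p ^ i / p ^ j := by
  have hp1 : 1 < p := hp.out.one_lt
  have h1 : p ^ i = p ^ j * p ^ (i - j) := by rw [← pow_add]; congr 1; omega
  rw [h1, Nat.add_mul_div_left _ _ (pow_pos (by omega) j),
      Nat.mul_div_cancel_left _ (pow_pos (by omega) j)]

lemma valB (m b : ℕ) :
    padicValNat p ((b + p ^ m)! * (b / p ^ m)!) ≤
    padicValNat p (b ! * ((p ^ m)! * ((b + p ^ m) / p ^ m)!)) := by
  have hp1 : 1 < p := hp.out.one_lt
  set a := b + p ^ m with ha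
  set B := Nat.log p a + 1 with hB
  have hval : ∀ n, n ≤ a → padicValNat p (n !) = ∑ i ∈ Finset.Ico 1 B, n / p ^ i :=
    fun n hn => padicValNat_factorial
      (lt_of_le_of_lt (Nat.log_mono_right hn) (Nat.lt_succ_self _))
  rw [padicValNat.mul (Nat.factorial_ne_zero _) (Nat.factorial_ne_zero _),
      padicValNat.mul (Nat.factorial_ne_zero _) (by positivity),
      padicValNat.mul (Nat.factorial_ne_zero _) (Nat.factorial_ne_zero _),
      hval a le_rfl, hval b (by omega),
      hval (b / p ^ m) (le_trans (Nat.div_le_self _ _) (by omega)),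
      hval (p ^ m) (by omega), hval (a / p ^ m) (Nat.div_le_self _ _)]
  have hdd : ∀ n, ∑ i ∈ Finset.Ico 1 B, n / p ^ m / p ^ i
      = ∑ i ∈ Finset.Ico 1 B, n / p ^ (m + i) :=
    fun n => Finset.sum_congr rfl fun i _ => by rw [Nat.div_div_eq_div_mul, pow_add]
  rw [hdd b, hdd a]
  set f : ℕ → ℕ := fun j => a / p ^ j - (b / p ^ j + p ^ m / p ^ j) with hf'
  have hfle : ∀ j, b / p ^ j + p ^ m / p ^ j ≤ a / p ^ j := fun j =>
    Nat.add_div_le_add_div b (p ^ m) (p ^ j)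
  have hf : ∀ j, a / p ^ j = b / p ^ j + p ^ m / p ^ j + f j := fun j =>
    (Nat.add_sub_cancel' (hfle j)).symm
  have hf0 : ∀ j, j ≤ m → f j = 0 := by
    intro j hj
    simp [hf', ha, exact_div_add b j m hj]
  have key : ∑ j ∈ Finset.Ico 1 B, f j ≤ ∑ j ∈ Finset.Ico 1 B, f (m + j) := by
    rw [sum_shift f B m]
    have e1 : ∑ j ∈ Finset.Ico 1 B, f j = ∑ j ∈ Finset.Ico (1 + m) B, f j :=
      (Finset.sum_subset (Finset.Ico_subset_Ico (by omega) le_rfl)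
        (fun x hx hx' => hf0 x (by
          simp only [Finset.mem_Ico] at hx hx'; omega))).symm
    rw [e1]
    exact Finset.sum_le_sum_of_subset (Finset.Ico_subset_Ico le_rfl (by omega))
  have h1 : ∑ i ∈ Finset.Ico 1 B, a / p ^ i
      = ∑ i ∈ Finset.Ico 1 B, b / p ^ i + ∑ i ∈ Finset.Ico 1 B, p ^ m / p ^ i
        + ∑ i ∈ Finset.Ico 1 B, f i := by
    rw [← Finset.sum_add_distrib, ← Finset.sum_add_distrib]
    exact Finset.sum_congr rfl fun j _ => hf j
  have h2 : ∑ i ∈ Finset.Ico 1 B, a / p ^ (m + i)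
      = ∑ i ∈ Finset.Ico 1 B, b / p ^ (m + i) + ∑ i ∈ Finset.Ico 1 B, p ^ m / p ^ (m + i)
        + ∑ i ∈ Finset.Ico 1 B, f (m + i) := by
    rw [← Finset.sum_add_distrib, ← Finset.sum_add_distrib]
    exact Finset.sum_congr rfl fun j _ => hf (m + j)
  omega

lemma valB' (i a : ℕ) (h1 : p ^ i ≤ a) (h2 : a < p ^ (i + 1)) :
    padicValNat p (a !) ≤ padicValNat p ((a - p ^ i)! * (p ^ i)!) := by
  have hp1 : 1 < p := hp.out.one_lt
  set B := Nat.log p a + 1 with hB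
  have hval : ∀ n, n ≤ a → padicValNat p (n !) = ∑ j ∈ Finset.Ico 1 B, n / p ^ j :=
    fun n hn => padicValNat_factorial
      (lt_of_le_of_lt (Nat.log_mono_right hn) (Nat.lt_succ_self _))
  rw [padicValNat.mul (Nat.factorial_ne_zero _) (Nat.factorial_ne_zero _),
      hval a le_rfl, hval (a - p ^ i) (by omega), hval (p ^ i) h1,
      ← Finset.sum_add_distrib]
  apply Finset.sum_le_sum
  intro j _
  rcases le_or_gt j i with hji | hji
  · have hd := exact_div_add (p := p) (a - p ^ i) j i hji
    rw [Nat.sub_add_cancel h1] at hd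
    omega
  · have : a < p ^ j := lt_of_lt_of_le h2 (Nat.pow_le_pow_right (by omega) hji)
    rw [Nat.div_eq_of_lt this]
    exact Nat.zero_le _

lemma norm_natDiv_le (x y : ℕ) (hy : y ≠ 0) (h : padicValNat p y ≤ padicValNat p x) :
    ‖(x : ℚ_[p]) / (y : ℚ_[p])‖ ≤ 1 := by
  rcases Nat.eq_zero_or_pos x with hx | hx
  · simp [hx]
  have hq : ((x : ℚ) / (y : ℚ)) ≠ 0 := by
    apply div_ne_zero <;> exact_mod_cast by omega
  have hcast : ((x : ℚ_[p]) / (y : ℚ_[p])) = (((x : ℚ) / (y : ℚ) : ℚ) : ℚ_[p]) := by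
    push_cast; ring
  rw [hcast, Padic.eq_padicNorm]
  have hpn : padicNorm p ((x : ℚ) / (y : ℚ))
      = (p : ℚ) ^ (-padicValRat p ((x : ℚ) / (y : ℚ))) := by
    simp [padicNorm, hq]
  rw [hpn]
  have hval : padicValRat p ((x : ℚ) / (y : ℚ))
      = (padicValNat p x : ℤ) - (padicValNat p y : ℤ) := by
    rw [padicValRat.div (p := p) (by exact_mod_cast by omega) (by exact_mod_cast hy),
        padicValRat.of_nat, padicValRat.of_nat]
  have : (p : ℚ) ^ (-padicValRat p ((x : ℚ) / (y : ℚ))) ≤ 1 := by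
    apply zpow_le_one_of_nonpos₀
    · exact_mod_cast le_of_lt hp.out.one_lt
    · rw [hval]; omega
  exact_mod_cast this



variable {m N : ℕ}

lemma xiGa_eq (k : Fin N →₀ ℕ) :
    xiGa p m N k = MvPolynomial.monomial k
      (∏ i : Fin N, ((Nat.factorial (k i / p ^ m) : ℚ_[p]) / (Nat.factorial (k i) : ℚ_[p]))) := by
  rw [xiGa, MvPolynomial.smul_monomial, smul_eq_mul, mul_one]

lemma coeff_single (j : Fin N) (a : ℕ) :
    (∏ i : Fin N,
        ((Nat.factorial ((Finsupp.single j a) i / p ^ m) : ℚ_[p]) /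
          (Nat.factorial ((Finsupp.single j a) i) : ℚ_[p])))
      = (Nat.factorial (a / p ^ m) : ℚ_[p]) / (Nat.factorial a : ℚ_[p]) := by
  rw [Finset.prod_eq_single j]
  · rw [Finsupp.single_eq_same]
  · intro i _ hij
    rw [Finsupp.single_eq_of_ne hij]
    simp
  · intro h; exact absurd (Finset.mem_univ j) h

lemma xiGa_single (j : Fin N) (a : ℕ) :
    xiGa p m N (Finsupp.single j a) = MvPolynomial.monomial (Finsupp.single j a)
      ((Nat.factorial (a / p ^ m) : ℚ_[p]) / (Nat.factorial a : ℚ_[p])) := by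
  rw [xiGa_eq, coeff_single]

lemma xiGa_zero : xiGa p m N 0 = 1 := by
  rw [xiGa_eq]
  simp

lemma prod_monomial {ι : Type*} (s : Finset ι) (f : ι → (Fin N →₀ ℕ)) (g : ι → ℚ_[p]) :
    ∏ i ∈ s, MvPolynomial.monomial (f i) (g i)
      = MvPolynomial.monomial (∑ i ∈ s, f i) (∏ i ∈ s, g i) := by
  classical
  induction s using Finset.cons_induction with
  | empty => simp
  | cons a s ha ih =>
      rw [Finset.prod_cons, Finset.prod_cons, Finset.sum_cons, ih, MvPolynomial.monomial_mul]

lemma xiGa_prod (k : Fin N →₀ ℕ) :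
    xiGa p m N k = ∏ i : Fin N, xiGa p m N (Finsupp.single i (k i)) := by
  simp only [xiGa_single]
  rw [prod_monomial, Finsupp.univ_sum_single, xiGa_eq]

lemma xiGa_mul (k l : Fin N →₀ ℕ) :
    ∃ z : ℤ_[p], xiGa p m N k * xiGa p m N l = z • xiGa p m N (k + l) := by
  set R : Fin N → ℚ_[p] := fun i =>
    ((Nat.factorial (k i + l i) *
        (Nat.factorial (k i / p ^ m) * Nat.factorial (l i / p ^ m)) : ℕ) : ℚ_[p]) /
    ((Nat.factorial (k i) * Nat.factorial (l i) *
        Nat.factorial ((k i + l i) / p ^ m) : ℕ) : ℚ_[p]) with hR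
  have hRnorm : ∀ i, ‖R i‖ ≤ 1 := fun i =>
    norm_natDiv_le _ _ (by positivity) (valA m (k i) (l i))
  have hz : ‖∏ i : Fin N, R i‖ ≤ 1 := by
    rw [norm_prod]
    exact Finset.prod_le_one (fun i _ => norm_nonneg _) (fun i _ => hRnorm i)
  set z : ℤ_[p] := ⟨∏ i : Fin N, R i, hz⟩ with hzdef
  refine ⟨z, ?_⟩
  rw [xiGa_eq, xiGa_eq, xiGa_eq, MvPolynomial.monomial_mul,
      ← algebraMap_smul ℚ_[p] z, PadicInt.algebraMap_apply,
      MvPolynomial.smul_monomial, smul_eq_mul]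
  congr 1
  show (∏ i : Fin N, ((Nat.factorial (k i / p ^ m) : ℚ_[p]) / (Nat.factorial (k i) : ℚ_[p]))) *
      (∏ i : Fin N, ((Nat.factorial (l i / p ^ m) : ℚ_[p]) / (Nat.factorial (l i) : ℚ_[p])))
    = (∏ i : Fin N, R i) *
      (∏ i : Fin N, ((Nat.factorial ((k + l) i / p ^ m) : ℚ_[p]) /
        (Nat.factorial ((k + l) i) : ℚ_[p])))
  rw [← Finset.prod_mul_distrib, ← Finset.prod_mul_distrib]
  refine Finset.prod_congr rfl fun i _ => ?_
  rw [Finsupp.add_apply, hR]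
  have h1 : ((Nat.factorial (k i) : ℚ_[p])) ≠ 0 := Nat.cast_ne_zero.mpr (Nat.factorial_ne_zero _)
  have h2 : ((Nat.factorial (l i) : ℚ_[p])) ≠ 0 := Nat.cast_ne_zero.mpr (Nat.factorial_ne_zero _)
  have h3 : ((Nat.factorial (k i + l i) : ℚ_[p])) ≠ 0 :=
    Nat.cast_ne_zero.mpr (Nat.factorial_ne_zero _)
  have h4 : ((Nat.factorial ((k i + l i) / p ^ m) : ℚ_[p])) ≠ 0 :=
    Nat.cast_ne_zero.mpr (Nat.factorial_ne_zero _)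
  push_cast
  field_simp

lemma pow_div_factorial_one {i : ℕ} (him : i ≤ m) : Nat.factorial (p ^ i / p ^ m) = 1 := by
  rcases eq_or_lt_of_le him with rfl | h
  · rw [Nat.div_self (pow_pos hp.out.pos _)]
    exact Nat.factorial_one
  · rw [Nat.div_eq_of_lt (Nat.pow_lt_pow_right hp.out.one_lt h)]
    exact Nat.factorial_zero

lemma single_mem (j : Fin N) (a : ℕ) :
    xiGa p m N (Finsupp.single j a) ∈ Algebra.adjoin ℤ_[p]
      { f : MvPolynomial (Fin N) ℚ_[p] |
        ∃ j : Fin N, ∃ i : ℕ, i ≤ m ∧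
          f = ((Nat.factorial (p ^ i) : ℚ_[p]))⁻¹ •
                (MvPolynomial.X j : MvPolynomial (Fin N) ℚ_[p]) ^ (p ^ i) } := by
  induction a using Nat.strong_induction_on with
  | _ a IH =>
  rcases Nat.eq_zero_or_pos a with rfl | ha
  · rw [Finsupp.single_zero, xiGa_zero]
    exact Subalgebra.one_mem _
  obtain ⟨i, him, hpia, h2⟩ :
      ∃ i, i ≤ m ∧ p ^ i ≤ a ∧ (i = m ∨ (a < p ^ (i + 1) ∧ a < p ^ m)) := by
    rcases le_or_gt (p ^ m) a with h | h
    · exact ⟨m, le_rfl, h, Or.inl rfl⟩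
    · exact ⟨Nat.log p a, le_of_lt (Nat.log_lt_of_lt_pow (by omega) h),
        Nat.pow_log_le_self p (by omega),
        Or.inr ⟨Nat.lt_pow_succ_log_self hp.out.one_lt a, h⟩⟩
  have hpi : 0 < p ^ i := pow_pos hp.out.pos _
  set b := a - p ^ i with hbdef
  have hab : a = b + p ^ i := by omega
  set den : ℕ := Nat.factorial a * Nat.factorial (b / p ^ m) with hden
  set num : ℕ := Nat.factorial b * (Nat.factorial (p ^ i) * Nat.factorial (a / p ^ m)) with hnum
  have hval : padicValNat p den ≤ padicValNat p num := by
    rcases h2 with rfl | ⟨hsm, hm⟩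
    · have h := valB (p := p) i b
      rw [← hab] at h
      exact h
    · have h0a : a / p ^ m = 0 := Nat.div_eq_of_lt hm
      have h0b : b / p ^ m = 0 := Nat.div_eq_of_lt (by omega)
      have h := valB' (p := p) i a hpia hsm
      rw [hden, hnum, h0a, h0b]
      simpa [Nat.factorial_zero, mul_one, hbdef] using h
  have hz : ‖(num : ℚ_[p]) / (den : ℚ_[p])‖ ≤ 1 := norm_natDiv_le num den (by positivity) hval
  set w : ℤ_[p] := ⟨(num : ℚ_[p]) / (den : ℚ_[p]), hz⟩ with hw
  have hgen : ((Nat.factorial (p ^ i) : ℚ_[p]))⁻¹ •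
        (MvPolynomial.X j : MvPolynomial (Fin N) ℚ_[p]) ^ (p ^ i)
      = MvPolynomial.monomial (Finsupp.single j (p ^ i))
          ((Nat.factorial (p ^ i) : ℚ_[p]))⁻¹ := by
    rw [MvPolynomial.X_pow_eq_monomial, MvPolynomial.smul_monomial, smul_eq_mul, mul_one]
  have key : xiGa p m N (Finsupp.single j a)
      = w • (((Nat.factorial (p ^ i) : ℚ_[p]))⁻¹ •
          (MvPolynomial.X j : MvPolynomial (Fin N) ℚ_[p]) ^ (p ^ i)
          * xiGa p m N (Finsupp.single j b)) := by
    rw [hgen, xiGa_single, xiGa_single, MvPolynomial.monomial_mul,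
        ← algebraMap_smul ℚ_[p] w, PadicInt.algebraMap_apply,
        MvPolynomial.smul_monomial, smul_eq_mul, ← Finsupp.single_add,
        show p ^ i + b = a by omega]
    congr 1
    show (Nat.factorial (a / p ^ m) : ℚ_[p]) / (Nat.factorial a : ℚ_[p])
      = ((num : ℚ_[p]) / (den : ℚ_[p])) *
        (((Nat.factorial (p ^ i) : ℚ_[p]))⁻¹ *
          ((Nat.factorial (b / p ^ m) : ℚ_[p]) / (Nat.factorial b : ℚ_[p])))
    have e1 : ((Nat.factorial a : ℚ_[p])) ≠ 0 := Nat.cast_ne_zero.mpr (Nat.factorial_ne_zero _)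
    have e2 : ((Nat.factorial b : ℚ_[p])) ≠ 0 := Nat.cast_ne_zero.mpr (Nat.factorial_ne_zero _)
    have e3 : ((Nat.factorial (p ^ i) : ℚ_[p])) ≠ 0 :=
      Nat.cast_ne_zero.mpr (Nat.factorial_ne_zero _)
    have e4 : ((Nat.factorial (b / p ^ m) : ℚ_[p])) ≠ 0 :=
      Nat.cast_ne_zero.mpr (Nat.factorial_ne_zero _)
    rw [hnum, hden]
    push_cast
    field_simp
  rw [key]
  refine Subalgebra.smul_mem _
    (mul_mem (Algebra.subset_adjoin ?_) (IH b (by omega))) w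
  exact ⟨j, i, him, rfl⟩

/-- `D^(m)(𝔾_a^N)`, realized as the `ℤ_p`-span of the `ξ^⟨k⟩` inside
`ℚ_p[X_1,…,X_N]`, is the `ℤ_p`-subalgebra generated by the finitely many
elements `X_j^{p^i}/(p^i)!` with `i ≤ m`; in particular it is Noetherian. -/
theorem stmt_3 (p : ℕ) [Fact p.Prime] (m N : ℕ) (hN : 1 ≤ N) :
    Subalgebra.toSubmodule
        (Algebra.adjoin ℤ_[p]
          { f : MvPolynomial (Fin N) ℚ_[p] |
            ∃ j : Fin N, ∃ i : ℕ, i ≤ m ∧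
              f = ((Nat.factorial (p ^ i) : ℚ_[p]))⁻¹ •
                    (MvPolynomial.X j : MvPolynomial (Fin N) ℚ_[p]) ^ (p ^ i) }) =
      Submodule.span ℤ_[p] (Set.range (xiGa p m N)) ∧
    IsNoetherianRing
      (Algebra.adjoin ℤ_[p]
        { f : MvPolynomial (Fin N) ℚ_[p] |
          ∃ j : Fin N, ∃ i : ℕ, i ≤ m ∧
            f = ((Nat.factorial (p ^ i) : ℚ_[p]))⁻¹ •
                  (MvPolynomial.X j : MvPolynomial (Fin N) ℚ_[p]) ^ (p ^ i) }) := by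
  set G : Set (MvPolynomial (Fin N) ℚ_[p]) :=
    { f : MvPolynomial (Fin N) ℚ_[p] |
      ∃ j : Fin N, ∃ i : ℕ, i ≤ m ∧
        f = ((Nat.factorial (p ^ i) : ℚ_[p]))⁻¹ •
              (MvPolynomial.X j : MvPolynomial (Fin N) ℚ_[p]) ^ (p ^ i) } with hG
  set S : Submodule ℤ_[p] (MvPolynomial (Fin N) ℚ_[p]) :=
    Submodule.span ℤ_[p] (Set.range (xiGa p m N)) with hS
  have h1S : (1 : MvPolynomial (Fin N) ℚ_[p]) ∈ S := by
    rw [← xiGa_zero (p := p) (m := m) (N := N)]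
    exact Submodule.subset_span ⟨0, rfl⟩
  have hmulS : ∀ x ∈ S, ∀ y ∈ S, x * y ∈ S := by
    intro x hx y hy
    refine Submodule.span_induction₂ (p := fun x y _ _ => x * y ∈ S)
      ?_ ?_ ?_ ?_ ?_ ?_ ?_ hx hy
    · rintro _ _ ⟨k, rfl⟩ ⟨l, rfl⟩
      obtain ⟨z, hz⟩ := xiGa_mul (p := p) (m := m) k l
      rw [hz]
      exact Submodule.smul_mem _ z (Submodule.subset_span ⟨k + l, rfl⟩)
    · intro y _; rw [zero_mul]; exact S.zero_mem
    · intro x _; rw [mul_zero]; exact S.zero_mem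
    · intro x y z _ _ _ h1 h2; rw [add_mul]; exact S.add_mem h1 h2
    · intro x y z _ _ _ h1 h2; rw [mul_add]; exact S.add_mem h1 h2
    · intro r x y _ _ h1; rw [smul_mul_assoc]; exact S.smul_mem r h1
    · intro r x y _ _ h1; rw [mul_smul_comm]; exact S.smul_mem r h1
  set S' : Subalgebra ℤ_[p] (MvPolynomial (Fin N) ℚ_[p]) :=
    S.toSubalgebra h1S (fun x y hx hy => hmulS x hx y hy) with hS'
  have hGS : G ⊆ ↑S' := by
    rintro f ⟨j, i, him, rfl⟩
    show _ ∈ S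
    have hgen : ((Nat.factorial (p ^ i) : ℚ_[p]))⁻¹ •
          (MvPolynomial.X j : MvPolynomial (Fin N) ℚ_[p]) ^ (p ^ i)
        = xiGa p m N (Finsupp.single j (p ^ i)) := by
      rw [xiGa_single, pow_div_factorial_one him, MvPolynomial.X_pow_eq_monomial,
          MvPolynomial.smul_monomial, smul_eq_mul, mul_one, Nat.cast_one, one_div]
    rw [hgen]
    exact Submodule.subset_span ⟨_, rfl⟩
  have hadj : Algebra.adjoin ℤ_[p] G = S' := by
    apply le_antisymm (Algebra.adjoin_le hGS)
    intro x hx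
    have hx' : x ∈ S := hx
    refine Submodule.span_induction ?_ ?_ ?_ ?_ hx'
    · rintro _ ⟨k, rfl⟩
      rw [xiGa_prod]
      exact Subalgebra.prod_mem _ fun i _ => single_mem i (k i)
    · exact Subalgebra.zero_mem _
    · intro a b _ _ ha hb; exact Subalgebra.add_mem _ ha hb
    · intro r a _ ha; exact Subalgebra.smul_mem _ ha r
  constructor
  · rw [hadj]
    exact Submodule.toSubalgebra_toSubmodule S h1S _
  · have hfin : G.Finite := by
      apply Set.Finite.subset (Set.finite_range (fun z : Fin N × Fin (m + 1) =>
        ((Nat.factorial (p ^ (z.2 : ℕ)) : ℚ_[p]))⁻¹ •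
          (MvPolynomial.X z.1 : MvPolynomial (Fin N) ℚ_[p]) ^ (p ^ (z.2 : ℕ))))
      rintro f ⟨j, i, him, rfl⟩
      exact ⟨(j, ⟨i, by omega⟩), rfl⟩
    exact isNoetherianRing_of_fg (Subalgebra.fg_def.mpr ⟨G, hfin, rfl⟩)
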